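/- For integers 0 ≤ k ≤ n, ∑_{s=0}^{⌊(n-k)/2⌋} n!/(s!·(k+s)!·(n-k-2s)!) = binomial(n,k) · ∑_{s=0}^{⌊(n-k)/2⌋} [((k-n)/2)_s · ((k-n+1)/2)_s / (k+1)_s] · 4^s/s!, i.e. the multinomial sum equals binomial(n,k) times the truncated hypergeometric series _2F_1((k-n)/2, (k+1-n)/2; k+1; 4). -/

import Mathlib

open Finset

lemma asc_double (s : ℕ) (x : ℚ) :
    (ascPochhammer ℚ s).eval x * (ascPochhammer ℚ s).eval (x + 1/2) * 4 ^ s =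
      (ascPochhammer ℚ (2 * s)).eval (2 * x) := by
  induction s with
  | zero => simp
  | succ s ih =>
    have h2 : 2 * (s + 1) = (2 * s + 1) + 1 := by ring
    rw [h2, ascPochhammer_succ_right, ascPochhammer_succ_right, ascPochhammer_succ_right]
    simp only [Polynomial.eval_mul, Polynomial.eval_add, Polynomial.eval_X,
      Polynomial.eval_natCast]
    push_cast
    linear_combination (2 * x + 2 * s) * (2 * x + 2 * s + 1) * ih

lemma asc_neg (m : ℕ) : ∀ t : ℕ, t ≤ m →
    (ascPochhammer ℚ t).eval (-(m : ℚ)) = (-1) ^ t * m.factorial / (m - t).factorial := by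
  intro t
  induction t with
  | zero =>
    intro _
    simp [div_self (Nat.cast_ne_zero.mpr m.factorial_ne_zero : (m.factorial : ℚ) ≠ 0)]
  | succ t ih =>
    intro ht
    have ht' : t < m := ht
    rw [ascPochhammer_succ_right]
    simp only [Polynomial.eval_mul, Polynomial.eval_add, Polynomial.eval_X,
      Polynomial.eval_natCast]
    rw [ih ht'.le]
    have h2 : ((m - t).factorial : ℚ) = ((m : ℚ) - t) * (m - (t + 1)).factorial := by
      have h1 : m - t = (m - (t + 1)) + 1 := by omega
      rw [h1, Nat.factorial_succ]
      push_cast [Nat.cast_sub ht]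
      ring
    have htm : (t : ℚ) < m := by exact_mod_cast ht'
    have hne : (m : ℚ) - t ≠ 0 := sub_ne_zero.mpr (ne_of_gt htm)
    have h3 : ((m - (t + 1)).factorial : ℚ) ≠ 0 :=
      Nat.cast_ne_zero.mpr (m - (t + 1)).factorial_ne_zero
    rw [h2]
    field_simp
    ring

lemma asc_succ_nat (k : ℕ) : ∀ s : ℕ,
    (ascPochhammer ℚ s).eval ((k : ℚ) + 1) = (k + s).factorial / k.factorial := by
  intro s
  induction s with
  | zero =>
    simp [div_self (Nat.cast_ne_zero.mpr k.factorial_ne_zero : (k.factorial : ℚ) ≠ 0)]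
  | succ s ih =>
    rw [ascPochhammer_succ_right]
    simp only [Polynomial.eval_mul, Polynomial.eval_add, Polynomial.eval_X,
      Polynomial.eval_natCast]
    rw [ih]
    have : (k + (s + 1)).factorial = (k + s).factorial * (k + s + 1) := by
      rw [show k + (s+1) = (k+s)+1 by ring, Nat.factorial_succ]; ring
    rw [this, div_mul_eq_mul_div]
    congr 1
    push_cast
    ring

/-- For `0 ≤ k ≤ n`, the multinomial sum `∑_s n!/(s!(k+s)!(n-k-2s)!)` equals
`binomial(n,k)` times the truncated hypergeometric series
`₂F₁((k-n)/2, (k+1-n)/2; k+1; 4)`. -/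
theorem multinomial_sum_eq_hypergeometric (n k : ℕ) (hk : k ≤ n) :
    ∑ s ∈ range ((n - k) / 2 + 1),
        (Nat.factorial n : ℚ) /
          (Nat.factorial s * Nat.factorial (k + s) * Nat.factorial (n - k - 2 * s)) =
      (n.choose k : ℚ) *
        ∑ s ∈ range ((n - k) / 2 + 1),
          ((ascPochhammer ℚ s).eval (((k : ℚ) - n) / 2) *
              (ascPochhammer ℚ s).eval (((k : ℚ) + 1 - n) / 2) /
            (ascPochhammer ℚ s).eval ((k : ℚ) + 1)) *
            (4 : ℚ) ^ s / Nat.factorial s := by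
  rw [mul_sum]
  apply sum_congr rfl
  intro s hs
  rw [mem_range] at hs
  have h2s : 2 * s ≤ n - k := by omega
  have hx : ((k : ℚ) + 1 - n) / 2 = ((k : ℚ) - n) / 2 + 1/2 := by ring
  have hkn : 2 * (((k : ℚ) - n) / 2) = -(((n - k : ℕ) : ℚ)) := by
    push_cast [Nat.cast_sub hk]; ring
  have hA : (ascPochhammer ℚ s).eval (((k : ℚ) - n) / 2) *
      (ascPochhammer ℚ s).eval (((k : ℚ) + 1 - n) / 2) * 4 ^ s =
      ((n - k).factorial : ℚ) / ((n - k - 2 * s).factorial) := by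
    rw [hx, asc_double, hkn, asc_neg (n - k) (2 * s) h2s]
    rw [pow_mul]
    norm_num
  have hC : (ascPochhammer ℚ s).eval ((k : ℚ) + 1) = (k + s).factorial / k.factorial :=
    asc_succ_nat k s
  have hchoose : (n.choose k : ℚ) = n.factorial / (k.factorial * (n - k).factorial) := by
    rw [Nat.cast_choose ℚ hk]
  rw [div_mul_eq_mul_div, hA, hC, hchoose]
  have f1 : (s.factorial : ℚ) ≠ 0 := Nat.cast_ne_zero.mpr s.factorial_ne_zero
  have f2 : ((k + s).factorial : ℚ) ≠ 0 := Nat.cast_ne_zero.mpr (k + s).factorial_ne_zero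
  have f3 : ((n - k - 2 * s).factorial : ℚ) ≠ 0 :=
    Nat.cast_ne_zero.mpr (n - k - 2 * s).factorial_ne_zero
  have f4 : (k.factorial : ℚ) ≠ 0 := Nat.cast_ne_zero.mpr k.factorial_ne_zero
  have f5 : ((n - k).factorial : ℚ) ≠ 0 := Nat.cast_ne_zero.mpr (n - k).factorial_ne_zero
  field_simp
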